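/- Let Ω ⊂ ℝⁿ be Lebesgue measurable with finite measure, (u_k) ⊂ L²(Ω), and let χ_k denote the characteristic function of {x : u_k(x) ≠ 0}. Assume χ_k → χ in L¹(Ω) for some characteristic function χ, and assume a subsequence u_{k_n} converges weakly in L²(Ω) to u*. Then (1 − χ)·u* = 0 almost everywhere in Ω. -/

import Mathlib

open MeasureTheory Filter Topology

/-- The characteristic function of the set `{x | w x ≠ 0}`. -/
noncomputable def chiSupp {α : Type*} (w : α → ℝ) : α → ℝ :=
  Set.indicator {x | w x ≠ 0} (fun _ => (1 : ℝ))

set_option maxHeartbeats 1000000 in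
/-- Abstract version of the main theorem, over a general measure space, with the
characteristic functions `c k` abstracted. -/
theorem weak_limit_vanishes_off_support_aux {α : Type*} [MeasurableSpace α] {μ : Measure α}
    (u : ℕ → Lp ℝ 2 μ) (c : ℕ → α → ℝ)
    (hc01 : ∀ k x, c k x = 0 ∨ c k x = 1)
    (hker : ∀ k x, (u k : α → ℝ) x = c k x * (u k : α → ℝ) x)
    (hmeasc : ∀ k, Measurable (c k))
    (A : Set α) (hA : MeasurableSet A)
    (hchi : Tendsto (fun k : ℕ => ∫⁻ x, ENNReal.ofReal
        |c k x - A.indicator (fun _ => (1 : ℝ)) x| ∂μ) atTop (𝓝 0))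
    (ustar : Lp ℝ 2 μ)
    (ks : ℕ → ℕ) (hks : StrictMono ks)
    (hweak : ∀ w : Lp ℝ 2 μ,
      Tendsto (fun m : ℕ => (inner ℝ (u (ks m)) w : ℝ)) atTop (𝓝 (inner ℝ ustar w : ℝ))) :
    ∀ᵐ x ∂μ, (1 - A.indicator (fun _ => (1 : ℝ)) x) * (ustar : α → ℝ) x = 0 := by
  classical
  have hχ01 : ∀ x, A.indicator (fun _ => (1 : ℝ)) x = 0 ∨ A.indicator (fun _ => (1 : ℝ)) x = 1 := by
    intro x
    by_cases h : x ∈ A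
    · right; simp [Set.indicator_of_mem h]
    · left; simp [Set.indicator_of_notMem h]
  have hmeasχ : Measurable (A.indicator (fun _ => (1 : ℝ))) := measurable_const.indicator hA
  -- the test function w = indicator of Aᶜ times ustar
  set g : α → ℝ := Aᶜ.indicator (ustar : α → ℝ) with hgdef
  have hgmem : MemLp g 2 μ := (Lp.memLp ustar).indicator hA.compl
  set w : Lp ℝ 2 μ := hgmem.toLp g with hwdef
  have hw : (w : α → ℝ) =ᵐ[μ] g := hgmem.coeFn_toLp
  -- |c k x - χ x| ≤ 1
  have habs1 : ∀ k x, |c k x - A.indicator (fun _ => (1 : ℝ)) x| ≤ 1 := by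
    intro k x
    rcases hc01 k x with h1 | h1 <;> rcases hχ01 x with h2 | h2 <;>
      rw [h1, h2] <;> norm_num
  -- integrability of (ustar)²
  have husq : Integrable (fun x => (ustar : α → ℝ) x ^ 2) μ :=
    (Lp.memLp ustar).integrable_sq
  -- inner products as integrals
  have hinner : ∀ f₁ f₂ : Lp ℝ 2 μ, (inner ℝ f₁ f₂ : ℝ)
      = ∫ x, (f₁ : α → ℝ) x * (f₂ : α → ℝ) x ∂μ := by
    intro f₁ f₂
    rw [L2.inner_def]
    congr 1
    funext a
    rw [RCLike.inner_apply', conj_trivial]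
  -- Step 1 : inner ℝ ustar w = inner ℝ w w
  have h2 : (inner ℝ ustar w : ℝ) = (inner ℝ w w : ℝ) := by
    rw [hinner, hinner]
    apply integral_congr_ae
    filter_upwards [hw] with x hx
    rw [hx]
    by_cases hxA : x ∈ A
    · have : g x = 0 := by simp [hgdef, Set.indicator_of_notMem, hxA]
      rw [this]; ring
    · have : g x = (ustar : α → ℝ) x := by
        simp [hgdef, Set.indicator_of_mem, hxA]
      rw [this]
  -- Step 2 : uniform bound on the norms via Banach–Steinhaus
  obtain ⟨C, hC⟩ : ∃ C : ℝ, ∀ m, ‖u (ks m)‖ ≤ C := by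
    have hBS : ∀ v : Lp ℝ 2 μ, ∃ C0 : ℝ, ∀ m : ℕ, ‖(innerSL ℝ (u (ks m))) v‖ ≤ C0 := by
      intro v
      have hbdd : BddAbove (Set.range fun m : ℕ => ‖(inner ℝ (u (ks m)) v : ℝ)‖) :=
        (hweak v).norm.bddAbove_range
      obtain ⟨C0, hC0⟩ := hbdd
      exact ⟨C0, fun m => by simpa using hC0 (Set.mem_range_self m)⟩
    obtain ⟨C', hC'⟩ := banach_steinhaus (g := fun m : ℕ => innerSL ℝ (u (ks m))) hBS
    exact ⟨C', fun m => by simpa [innerSL_apply_norm] using hC' m⟩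
  have hC0 : (0 : ℝ) ≤ C := le_trans (norm_nonneg _) (hC 0)
  -- Step 3 : convergence in measure and a.e. convergent subsequence
  have hchi' : Tendsto (fun m : ℕ =>
      eLpNorm (c (ks m) - A.indicator (fun _ => (1 : ℝ))) 1 μ) atTop (𝓝 0) := by
    have hcomp := hchi.comp hks.tendsto_atTop
    have heq : ∀ k : ℕ, eLpNorm (c k - A.indicator (fun _ => (1 : ℝ))) 1 μ
        = ∫⁻ x, ENNReal.ofReal |c k x - A.indicator (fun _ => (1 : ℝ)) x| ∂μ := by
      intro k
      rw [eLpNorm_one_eq_lintegral_enorm]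
      apply lintegral_congr
      intro x
      simp [Real.enorm_eq_ofReal_abs, Pi.sub_apply]
    exact (hcomp.congr fun m => (heq (ks m)).symm)
  have htim : TendstoInMeasure μ (fun m => c (ks m)) atTop (A.indicator (fun _ => (1 : ℝ))) :=
    tendstoInMeasure_of_tendsto_eLpNorm one_ne_zero
      (fun m => (hmeasc (ks m)).aestronglyMeasurable)
      hmeasχ.aestronglyMeasurable hchi'
  obtain ⟨ns, hns_mono, hae⟩ := htim.exists_seq_tendsto_ae
  -- Step 4 : the dominating integrals tend to zero
  set I : ℕ → ℝ := fun j => ∫ x, |c (ks (ns j)) x - A.indicator (fun _ => (1 : ℝ)) x|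
      * (ustar : α → ℝ) x ^ 2 ∂μ with hIdef
  have hI0 : Tendsto I atTop (𝓝 0) := by
    have := tendsto_integral_of_dominated_convergence
      (F := fun j x => |c (ks (ns j)) x - A.indicator (fun _ => (1 : ℝ)) x|
        * (ustar : α → ℝ) x ^ 2)
      (f := fun _ => (0 : ℝ))
      (bound := fun x => (ustar : α → ℝ) x ^ 2)
      (fun j => (((hmeasc (ks (ns j))).sub hmeasχ).abs.aestronglyMeasurable.mul
        ((Lp.aestronglyMeasurable ustar).pow 2)))
      husq
      (fun j => Filter.Eventually.of_forall fun x => by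
        have h1 : |c (ks (ns j)) x - A.indicator (fun _ => (1 : ℝ)) x| ≤ 1 := habs1 _ _
        have h2 : (0:ℝ) ≤ (ustar : α → ℝ) x ^ 2 := sq_nonneg _
        rw [Real.norm_eq_abs, abs_mul, abs_abs, abs_of_nonneg h2]
        simpa using mul_le_of_le_one_left h2 h1)
      ?_
    · simpa using this
    · filter_upwards [hae] with x hx
      have : Tendsto (fun j => |c (ks (ns j)) x - A.indicator (fun _ => (1 : ℝ)) x|) atTop
          (𝓝 |A.indicator (fun _ => (1 : ℝ)) x - A.indicator (fun _ => (1 : ℝ)) x|) :=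
        ((hx.sub_const _).abs)
      simpa using this.mul_const ((ustar : α → ℝ) x ^ 2)
  -- Step 5 : bound |⟨u_{k_{ns j}}, w⟩| ≤ C √(I j)
  have hbound : ∀ j : ℕ, ‖(inner ℝ (u (ks (ns j))) w : ℝ)‖ ≤ C * Real.sqrt (I j) := by
    intro j
    set k := ks (ns j) with hkd
    have hhmem : MemLp (fun x => c k x * g x) 2 μ := by
      refine hgmem.of_le ((hmeasc k).aestronglyMeasurable.mul hgmem.aestronglyMeasurable) ?_
      refine Filter.Eventually.of_forall fun x => ?_
      rw [Real.norm_eq_abs, Real.norm_eq_abs, abs_mul]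
      rcases hc01 k x with h | h <;> rw [h] <;> simp [abs_nonneg]
    set H : Lp ℝ 2 μ := hhmem.toLp _ with hHdef
    have hH : (H : α → ℝ) =ᵐ[μ] fun x => c k x * g x := hhmem.coeFn_toLp
    -- ⟨u k, w⟩ = ⟨u k, H⟩
    have hiw : (inner ℝ (u k) w : ℝ) = (inner ℝ (u k) H : ℝ) := by
      rw [hinner, hinner]
      apply integral_congr_ae
      filter_upwards [hw, hH] with x hx1 hx2
      rw [hx1, hx2]
      calc (u k : α → ℝ) x * g x = (c k x * (u k : α → ℝ) x) * g x := by rw [← hker k x]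
        _ = (u k : α → ℝ) x * (c k x * g x) := by ring
    -- ‖H‖² ≤ I j
    have hDint : Integrable (fun x => |c k x - A.indicator (fun _ => (1 : ℝ)) x|
        * (ustar : α → ℝ) x ^ 2) μ := by
      refine husq.mono' (((hmeasc k).sub hmeasχ).abs.aestronglyMeasurable.mul
        ((Lp.aestronglyMeasurable ustar).pow 2)) ?_
      refine Filter.Eventually.of_forall fun x => ?_
      have h2 : (0:ℝ) ≤ (ustar : α → ℝ) x ^ 2 := sq_nonneg _
      rw [Real.norm_eq_abs, abs_mul, abs_abs, abs_of_nonneg h2]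
      nlinarith [habs1 k x, abs_nonneg (c k x - A.indicator (fun _ => (1 : ℝ)) x)]
    have hHsq : ‖H‖ ^ 2 ≤ I j := by
      have hHH : ‖H‖ ^ 2 = ∫ x, (c k x * g x) * (c k x * g x) ∂μ := by
        rw [← real_inner_self_eq_norm_sq, hinner]
        exact integral_congr_ae (by filter_upwards [hH] with x hx; rw [hx])
      rw [hHH, hIdef]
      apply integral_mono_of_nonneg
      · exact Filter.Eventually.of_forall fun x => mul_self_nonneg _
      · exact hDint
      · refine Filter.Eventually.of_forall fun x => ?_
        beta_reduce
        by_cases hxA : x ∈ A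
        · have hg0 : g x = 0 := by simp [hgdef, Set.indicator_of_notMem, hxA]
          rw [hg0]
          have : (0:ℝ) ≤ |c k x - A.indicator (fun _ => (1 : ℝ)) x|
              * (ustar : α → ℝ) x ^ 2 := mul_nonneg (abs_nonneg _) (sq_nonneg _)
          simpa using this
        · have hgx : g x = (ustar : α → ℝ) x := by
            simp [hgdef, Set.indicator_of_mem, hxA]
          have hχx : A.indicator (fun _ => (1 : ℝ)) x = 0 := by
            simp [Set.indicator_of_notMem, hxA]
          rw [hgx, hχx, sub_zero]
          rcases hc01 k x with h | h <;> rw [h] <;> norm_num [pow_two]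
    have hHle : ‖H‖ ≤ Real.sqrt (I j) := by
      have h1 : ‖H‖ = Real.sqrt (‖H‖ ^ 2) := (Real.sqrt_sq (norm_nonneg _)).symm
      rw [h1]
      exact Real.sqrt_le_sqrt hHsq
    calc ‖(inner ℝ (u k) w : ℝ)‖ = |(inner ℝ (u k) H : ℝ)| := by rw [hiw, Real.norm_eq_abs]
      _ ≤ ‖u k‖ * ‖H‖ := abs_real_inner_le_norm _ _
      _ ≤ C * Real.sqrt (I j) :=
          mul_le_mul (hC (ns j)) hHle (norm_nonneg _) hC0
  -- Step 6 : conclude ⟨ustar, w⟩ = 0, hence w = 0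
  have hzero : Tendsto (fun j : ℕ => (inner ℝ (u (ks (ns j))) w : ℝ)) atTop (𝓝 0) := by
    apply squeeze_zero_norm hbound
    have hsq : Tendsto (fun j => Real.sqrt (I j)) atTop (𝓝 (Real.sqrt 0)) :=
      (Real.continuous_sqrt.tendsto 0).comp hI0
    have := hsq.const_mul C
    simpa using this
  have hsub : Tendsto (fun j : ℕ => (inner ℝ (u (ks (ns j))) w : ℝ)) atTop
      (𝓝 (inner ℝ ustar w : ℝ)) := (hweak w).comp hns_mono.tendsto_atTop
  have hww : (inner ℝ w w : ℝ) = 0 := by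
    rw [← h2]
    exact tendsto_nhds_unique hsub hzero
  have hw0 : w = 0 := inner_self_eq_zero.mp hww
  have hg0 : g =ᵐ[μ] 0 := by
    have := (Lp.eq_zero_iff_ae_eq_zero).mp hw0
    exact hw.symm.trans this
  -- finish
  filter_upwards [hg0] with x hx
  by_cases hxA : x ∈ A
  · have h1 : A.indicator (fun _ => (1 : ℝ)) x = 1 := by simp [Set.indicator_of_mem hxA]
    rw [h1]; ring
  · have h1 : A.indicator (fun _ => (1 : ℝ)) x = 0 := by simp [Set.indicator_of_notMem hxA]
    have h2 : g x = (ustar : α → ℝ) x := by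
      simp [hgdef, Set.indicator_of_mem, hxA]
    rw [h1]
    have : (ustar : α → ℝ) x = 0 := by rw [← h2]; exact hx
    rw [this]; ring

set_option maxHeartbeats 1000000 in
/-- if the characteristic functions `χ_k` of `{u_k ≠ 0}` converge in `L¹(Ω)` to
the characteristic function `χ` of a set `A`, and a subsequence `u_{k_n}` converges weakly in
`L²(Ω)` to `u*`, then `(1 − χ)·u* = 0` almost everywhere in `Ω`. -/
theorem weak_limit_vanishes_off_support (n : ℕ) (Ω : Set (EuclideanSpace ℝ (Fin n)))
    (hΩ : MeasurableSet Ω) (hfin : volume Ω < ⊤)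
    (u : ℕ → Lp ℝ 2 (volume.restrict Ω))
    (A : Set (EuclideanSpace ℝ (Fin n))) (hA : MeasurableSet A)
    (hchi : Tendsto (fun k : ℕ => ∫⁻ x, ENNReal.ofReal
        |chiSupp (u k : EuclideanSpace ℝ (Fin n) → ℝ) x -
          A.indicator (fun _ => (1 : ℝ)) x| ∂(volume.restrict Ω)) atTop (nhds 0))
    (ustar : Lp ℝ 2 (volume.restrict Ω))
    (ks : ℕ → ℕ) (hks : StrictMono ks)
    (hweak : ∀ w : Lp ℝ 2 (volume.restrict Ω),
      Tendsto (fun m : ℕ => (inner ℝ (u (ks m)) w : ℝ)) atTop (nhds (inner ℝ ustar w : ℝ))) :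
    ∀ᵐ x ∂(volume.restrict Ω),
      (1 - A.indicator (fun _ => (1 : ℝ)) x) * (ustar : EuclideanSpace ℝ (Fin n) → ℝ) x = 0 := by
  refine weak_limit_vanishes_off_support_aux u
    (fun k => chiSupp (u k : EuclideanSpace ℝ (Fin n) → ℝ)) ?_ ?_ ?_ A hA hchi ustar ks hks hweak
  · intro k x
    by_cases h : (u k : EuclideanSpace ℝ (Fin n) → ℝ) x ≠ 0
    · right; simp [chiSupp, Set.indicator_apply, h]
    · left; simp only [ne_eq, not_not] at h
      simp [chiSupp, Set.indicator_apply, h]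
  · intro k x
    by_cases h : (u k : EuclideanSpace ℝ (Fin n) → ℝ) x = 0
    · simp [h]
    · have : chiSupp (u k : EuclideanSpace ℝ (Fin n) → ℝ) x = 1 := by
        simp [chiSupp, Set.indicator_apply, h]
      beta_reduce
      rw [this, one_mul]
  · intro k
    have hset : MeasurableSet {x | (u k : EuclideanSpace ℝ (Fin n) → ℝ) x ≠ 0} := by
      have : {x | (u k : EuclideanSpace ℝ (Fin n) → ℝ) x ≠ 0}
          = (u k : EuclideanSpace ℝ (Fin n) → ℝ) ⁻¹' ({0}ᶜ) := rfl
      rw [this]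
      exact (measurableSet_singleton (0 : ℝ)).compl.preimage
        (Lp.stronglyMeasurable (u k)).measurable
    exact measurable_const.indicator hset
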